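/- (Peleg's second induction step) Let C = {S_1,…,S_k} be a minimal balanced collection on N with weights λ, let p ∉ N, and let I ⊆ {1,…,k} with ∑_{i∈I} λ_{S_i} < 1. Then C' = {S_i ∪ {p} : i ∈ I} ∪ {S_j : j ∉ I} ∪ {{p}} is a minimal balanced collection on N ∪ {p}, with the weight of {p} equal to 1 - ∑_{i∈I} λ_{S_i}. -/
import Mathlib


open Finset

def IsBalancedOn {α : Type*} [DecidableEq α] (M : Finset α) (B : Finset (Finset α))
    (w : Finset α → ℝ) : Prop :=
  (∀ S ∈ B, S ⊆ M ∧ S.Nonempty) ∧ (∀ S ∈ B, 0 < w S) ∧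
  ∀ i ∈ M, ∑ S ∈ B, w S * (if i ∈ S then (1 : ℝ) else 0) = 1

def IsBalanced {α : Type*} [DecidableEq α] (M : Finset α) (B : Finset (Finset α)) : Prop :=
  ∃ w : Finset α → ℝ, IsBalancedOn M B w

def IsMinimalBalanced {α : Type*} [DecidableEq α] (M : Finset α)
    (B : Finset (Finset α)) : Prop :=
  IsBalanced M B ∧ ∀ B' ⊆ B, B' ≠ B → ¬ IsBalanced M B'

lemma aux_proper {α : Type*} [DecidableEq α] (N : Finset α) (C : Finset (Finset α))
    (lam mu : Finset α → ℝ) (hl : IsBalancedOn N C lam) (hm : IsBalancedOn N C mu)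
    (S0 : Finset α) (hS0 : S0 ∈ C) (hlt : mu S0 < lam S0) :
    ∃ B' ⊆ C, B' ≠ C ∧ IsBalanced N B' := by
  classical
  set A := C.filter (fun S => mu S < lam S) with hA
  have hS0A : S0 ∈ A := by simp [hA, hS0, hlt]
  obtain ⟨T, hTA, hTmin⟩ := A.exists_min_image (fun S => lam S / (lam S - mu S)) ⟨S0, hS0A⟩
  have hTC : T ∈ C := (mem_filter.mp hTA).1
  have hTlt : mu T < lam T := (mem_filter.mp hTA).2
  set t := lam T / (lam T - mu T) with ht
  have hdT : 0 < lam T - mu T := by linarith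
  have ht0 : 0 < t := div_pos (hl.2.1 T hTC) hdT
  set ν : Finset α → ℝ := fun S => (1 - t) * lam S + t * mu S with hν
  have hνT : ν T = 0 := by
    have : t * (lam T - mu T) = lam T := div_mul_cancel₀ _ hdT.ne'
    simp only [hν]; nlinarith
  have hν_nonneg : ∀ S ∈ C, 0 ≤ ν S := by
    intro S hS
    by_cases h : mu S < lam S
    · have hSA : S ∈ A := by simp [hA, hS, h]
      have hd : 0 < lam S - mu S := by linarith
      have h1 : t ≤ lam S / (lam S - mu S) := hTmin S hSA
      have h2 : t * (lam S - mu S) ≤ lam S := (le_div_iff₀ hd).mp h1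
      simp only [hν]; nlinarith
    · push_neg at h
      have := hl.2.1 S hS
      simp only [hν]; nlinarith
  refine ⟨C.filter (fun S => 0 < ν S), filter_subset _ _, ?_, ν, ?_, ?_, ?_⟩
  · intro h
    have : T ∈ C.filter (fun S => 0 < ν S) := by rw [h]; exact hTC
    rw [mem_filter] at this
    linarith [this.2]
  · intro S hS; exact hl.1 S (mem_filter.mp hS).1
  · intro S hS; exact (mem_filter.mp hS).2
  · intro i hi
    have hsum : ∑ S ∈ C.filter (fun S => 0 < ν S), ν S * (if i ∈ S then (1:ℝ) else 0)
        = ∑ S ∈ C, ν S * (if i ∈ S then (1:ℝ) else 0) := by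
      apply Finset.sum_filter_of_ne
      intro S hS hne
      rcases lt_or_eq_of_le (hν_nonneg S hS) with h | h
      · exact h
      · exact absurd (by rw [← h, zero_mul]) hne
    rw [hsum]
    have : ∀ S ∈ C, ν S * (if i ∈ S then (1:ℝ) else 0)
        = (1 - t) * (lam S * (if i ∈ S then (1:ℝ) else 0))
          + t * (mu S * (if i ∈ S then (1:ℝ) else 0)) := by
      intro S _; simp only [hν]; ring
    rw [Finset.sum_congr rfl this, Finset.sum_add_distrib, ← Finset.mul_sum, ← Finset.mul_sum,
      hl.2.2 i hi, hm.2.2 i hi]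
    ring

lemma weights_unique {α : Type*} [DecidableEq α] (N : Finset α) (C : Finset (Finset α))
    (lam mu : Finset α → ℝ) (hl : IsBalancedOn N C lam) (hm : IsBalancedOn N C mu)
    (hmin : IsMinimalBalanced N C) : ∀ S ∈ C, lam S = mu S := by
  intro S hS
  by_contra hne
  rcases lt_or_gt_of_ne hne with h | h
  · obtain ⟨B', hsub, hne', hbal⟩ := aux_proper N C mu lam hm hl S hS h
    exact hmin.2 B' hsub hne' hbal
  · obtain ⟨B', hsub, hne', hbal⟩ := aux_proper N C lam mu hl hm S hS h
    exact hmin.2 B' hsub hne' hbal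

lemma bal_new {α : Type*} [DecidableEq α]
    (N : Finset α) (p : α) (hp : p ∉ N)
    (C : Finset (Finset α)) (lam : Finset α → ℝ)
    (hC : IsBalancedOn N C lam)
    (I : Finset (Finset α)) (hI : I ⊆ C) (hsum : ∑ S ∈ I, lam S < 1) :
    IsBalancedOn (insert p N)
      (insert ({p} : Finset α) ((I.image (insert p ·)) ∪ (C \ I)))
      (fun T => if T = {p} then 1 - ∑ S ∈ I, lam S
        else if p ∈ T then lam (T.erase p) else lam T) := by
  classical
  have hpnot : ∀ S ∈ C, p ∉ S := fun S hS h => hp ((hC.1 S hS).1 h)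
  have hins_ne : ∀ S ∈ I, insert p S ≠ ({p} : Finset α) := by
    intro S hS h
    obtain ⟨q, hq⟩ := (hC.1 S (hI hS)).2
    have hqp : q ≠ p := fun e => hpnot S (hI hS) (e ▸ hq)
    have : q ∈ ({p} : Finset α) := h ▸ (mem_insert_of_mem hq)
    exact hqp (mem_singleton.mp this)
  have herase : ∀ S ∈ I, (insert p S).erase p = S :=
    fun S hS => erase_insert (hpnot S (hI hS))
  have hinj : ∀ x ∈ I, ∀ y ∈ I, insert p x = insert p y → x = y := by
    intro x hx y hy h
    rw [← herase x hx, ← herase y hy, h]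
  have hdisj : Disjoint (I.image (insert p ·)) (C \ I) := by
    rw [disjoint_left]
    intro T hT hT'
    obtain ⟨S, _, rfl⟩ := mem_image.mp hT
    exact hpnot _ ((mem_sdiff.mp hT').1) (mem_insert_self p S)
  have hpX : ({p} : Finset α) ∉ (I.image (insert p ·)) ∪ (C \ I) := by
    intro h
    rcases mem_union.mp h with h | h
    · obtain ⟨S, hS, hSe⟩ := mem_image.mp h
      exact hins_ne S hS hSe
    · exact hpnot _ (mem_sdiff.mp h).1 (mem_singleton_self p)
  refine ⟨?_, ?_, ?_⟩
  · intro T hT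
    rcases mem_insert.mp hT with rfl | hT
    · exact ⟨by simp, singleton_nonempty p⟩
    rcases mem_union.mp hT with h | h
    · obtain ⟨S, hS, rfl⟩ := mem_image.mp h
      exact ⟨insert_subset_insert p (hC.1 S (hI hS)).1, insert_nonempty p S⟩
    · exact ⟨((hC.1 T (mem_sdiff.mp h).1).1).trans (subset_insert p N),
        (hC.1 T (mem_sdiff.mp h).1).2⟩
  · intro T hT
    dsimp only
    rcases mem_insert.mp hT with rfl | hT
    · rw [if_pos rfl]; linarith
    rcases mem_union.mp hT with h | h
    · obtain ⟨S, hS, rfl⟩ := mem_image.mp h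
      rw [if_neg (hins_ne S hS), if_pos (mem_insert_self p S), herase S hS]
      exact hC.2.1 S (hI hS)
    · have hTC := (mem_sdiff.mp h).1
      have h1 : T ≠ ({p} : Finset α) := by
        intro e; exact hpnot T hTC (e ▸ mem_singleton_self p)
      rw [if_neg h1, if_neg (hpnot T hTC)]
      exact hC.2.1 T hTC
  · intro i hi
    rw [Finset.sum_insert hpX, Finset.sum_union hdisj, Finset.sum_image hinj]
    dsimp only
    rcases mem_insert.mp hi with rfl | hi
    · have h2 : ∀ S ∈ I, (if insert i S = ({i}:Finset α) then 1 - ∑ S ∈ I, lam S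
          else if i ∈ insert i S then lam ((insert i S).erase i) else lam (insert i S))
            * (if i ∈ insert i S then (1:ℝ) else 0) = lam S := by
        intro S hS
        rw [if_neg (hins_ne S hS), if_pos (mem_insert_self i S), herase S hS,
          if_pos (mem_insert_self i S), mul_one]
      have h3 : ∀ T ∈ C \ I, (if T = ({i}:Finset α) then 1 - ∑ S ∈ I, lam S
          else if i ∈ T then lam (T.erase i) else lam T) * (if i ∈ T then (1:ℝ) else 0) = 0 := by
        intro T hT
        simp [hpnot T (mem_sdiff.mp hT).1]
      rw [Finset.sum_congr rfl h2, Finset.sum_congr rfl h3, Finset.sum_const_zero,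
        if_pos rfl, if_pos (mem_singleton_self i), mul_one]
      ring
    · have hip : i ≠ p := fun e => hp (e ▸ hi)
      have h2 : ∀ S ∈ I, (if insert p S = ({p}:Finset α) then 1 - ∑ S ∈ I, lam S
          else if p ∈ insert p S then lam ((insert p S).erase p) else lam (insert p S))
            * (if i ∈ insert p S then (1:ℝ) else 0)
          = lam S * (if i ∈ S then (1:ℝ) else 0) := by
        intro S hS
        rw [if_neg (hins_ne S hS), if_pos (mem_insert_self p S), herase S hS]
        congr 1
        simp [mem_insert, hip]
      have h3 : ∀ T ∈ C \ I, (if T = ({p}:Finset α) then 1 - ∑ S ∈ I, lam S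
          else if p ∈ T then lam (T.erase p) else lam T) * (if i ∈ T then (1:ℝ) else 0)
          = lam T * (if i ∈ T then (1:ℝ) else 0) := by
        intro T hT
        have hTC := (mem_sdiff.mp hT).1
        have h1 : T ≠ ({p} : Finset α) := fun e => hpnot T hTC (e ▸ mem_singleton_self p)
        rw [if_neg h1, if_neg (hpnot T hTC)]
      rw [Finset.sum_congr rfl h2, Finset.sum_congr rfl h3,
        if_neg (by simp [hip] : i ∉ ({p}:Finset α)), mul_zero, zero_add, add_comm,
        Finset.sum_sdiff hI, hC.2.2 i hi]


theorem stmt12 {α : Type*} [DecidableEq α]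
    (N : Finset α) (p : α) (hp : p ∉ N)
    (C : Finset (Finset α)) (lam : Finset α → ℝ)
    (hC : IsBalancedOn N C lam) (hmin : IsMinimalBalanced N C)
    (I : Finset (Finset α)) (hI : I ⊆ C) (hsum : ∑ S ∈ I, lam S < 1) :
    IsMinimalBalanced (insert p N)
      (insert ({p} : Finset α) ((I.image (insert p ·)) ∪ (C \ I))) ∧
    ∃ w : Finset α → ℝ,
      IsBalancedOn (insert p N)
        (insert ({p} : Finset α) ((I.image (insert p ·)) ∪ (C \ I))) w ∧
      w {p} = 1 - ∑ S ∈ I, lam S := by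
  classical
  have hbal := bal_new N p hp C lam hC I hI hsum
  have hpnot : ∀ S ∈ C, p ∉ S := fun S hS h => hp ((hC.1 S hS).1 h)
  have hins_ne : ∀ S ∈ I, insert p S ≠ ({p} : Finset α) := by
    intro S hS h
    obtain ⟨q, hq⟩ := (hC.1 S (hI hS)).2
    have hqp : q ≠ p := fun e => hpnot S (hI hS) (e ▸ hq)
    have : q ∈ ({p} : Finset α) := h ▸ (mem_insert_of_mem hq)
    exact hqp (mem_singleton.mp this)
  have herase : ∀ S ∈ I, (insert p S).erase p = S :=
    fun S hS => erase_insert (hpnot S (hI hS))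
  have hinj : ∀ x ∈ I, ∀ y ∈ I, insert p x = insert p y → x = y := by
    intro x hx y hy h
    rw [← herase x hx, ← herase y hy, h]
  have hdisj : Disjoint (I.image (insert p ·)) (C \ I) := by
    rw [disjoint_left]
    intro T hT hT'
    obtain ⟨S, _, rfl⟩ := mem_image.mp hT
    exact hpnot _ ((mem_sdiff.mp hT').1) (mem_insert_self p S)
  refine ⟨⟨⟨_, hbal⟩, ?_⟩, ⟨_, hbal, if_pos rfl⟩⟩
  intro B' hB'sub hB'ne hB'bal
  obtain ⟨μ, hμ⟩ := hB'bal
  have key : ∀ T ∈ B'.erase {p}, T.erase p ∈ C ∧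
      T = (if T.erase p ∈ I then insert p (T.erase p) else T.erase p) := by
    intro T hT
    have hTne : T ≠ {p} := (mem_erase.mp hT).1
    have hTB' : T ∈ B' := (mem_erase.mp hT).2
    have hTC' := hB'sub hTB'
    rcases mem_insert.mp hTC' with rfl | hTX
    · exact absurd rfl hTne
    rcases mem_union.mp hTX with h | h
    · obtain ⟨S, hS, rfl⟩ := mem_image.mp h
      rw [herase S hS]
      exact ⟨hI hS, by rw [if_pos hS]⟩
    · have hTC := (mem_sdiff.mp h).1
      have hpT : p ∉ T := hpnot T hTC
      rw [erase_eq_of_notMem hpT]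
      exact ⟨hTC, by rw [if_neg (mem_sdiff.mp h).2]⟩
  set D := (B'.erase {p}).image (·.erase p) with hD
  have hDsub : D ⊆ C := by
    intro S hS
    obtain ⟨T, hT, rfl⟩ := mem_image.mp hS
    exact (key T hT).1
  have hinjD : ∀ x ∈ B'.erase {p}, ∀ y ∈ B'.erase {p}, x.erase p = y.erase p → x = y := by
    intro x hx y hy h
    rw [(key x hx).2, (key y hy).2, h]
  set ν : Finset α → ℝ := fun S => if S ∈ I then μ (insert p S) else μ S with hν
  have hνT : ∀ T ∈ B'.erase {p}, ν (T.erase p) = μ T := by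
    intro T hT
    simp only [hν]
    split_ifs with h
    · have h2 := (key T hT).2
      rw [if_pos h] at h2
      rw [← h2]
    · have h2 := (key T hT).2
      rw [if_neg h] at h2
      rw [← h2]
  have hDbal : IsBalancedOn N D ν := by
    refine ⟨fun S hS => hC.1 S (hDsub hS), ?_, ?_⟩
    · intro S hS
      obtain ⟨T, hT, rfl⟩ := mem_image.mp hS
      rw [hνT T hT]
      exact hμ.2.1 T (mem_erase.mp hT).2
    · intro i hi
      have hip : i ≠ p := fun e => hp (e ▸ hi)
      rw [hD, Finset.sum_image hinjD]
      have hcongr : ∀ T ∈ B'.erase {p}, ν (T.erase p) * (if i ∈ T.erase p then (1:ℝ) else 0)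
          = μ T * (if i ∈ T then 1 else 0) := by
        intro T hT
        rw [hνT T hT]
        congr 1
        simp [Finset.mem_erase, hip]
      rw [Finset.sum_congr rfl hcongr,
        Finset.sum_erase _ (by rw [if_neg (by simp [hip] : i ∉ ({p}:Finset α)), mul_zero]),
        hμ.2.2 i (mem_insert_of_mem hi)]
  have hDC : D = C := by
    by_contra hne
    exact hmin.2 D hDsub hne ⟨ν, hDbal⟩
  have hmem : ∀ S ∈ C, (if S ∈ I then insert p S else S) ∈ B' := by
    intro S hS
    rw [← hDC] at hS
    obtain ⟨T, hT, rfl⟩ := mem_image.mp hS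
    rw [← (key T hT).2]
    exact (mem_erase.mp hT).2
  have hXB : (I.image (insert p ·)) ∪ (C \ I) ⊆ B' := by
    intro T hT
    rcases mem_union.mp hT with h | h
    · obtain ⟨S, hS, rfl⟩ := mem_image.mp h
      have := hmem S (hI hS)
      rwa [if_pos hS] at this
    · have := hmem T (mem_sdiff.mp h).1
      rwa [if_neg (mem_sdiff.mp h).2] at this
  have hpB : ({p}:Finset α) ∉ B' := by
    intro h
    apply hB'ne
    apply Finset.Subset.antisymm hB'sub
    intro T hT
    rcases mem_insert.mp hT with rfl | hT
    · exact h
    · exact hXB hT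
  have hBX : B' = (I.image (insert p ·)) ∪ (C \ I) := by
    apply Finset.Subset.antisymm
    · intro T hT
      rcases mem_insert.mp (hB'sub hT) with rfl | h
      · exact absurd hT hpB
      · exact h
    · exact hXB
  have hDbal' : IsBalancedOn N C ν := hDC ▸ hDbal
  have huniq := weights_unique N C lam ν hC hDbal' hmin
  have hbp := hμ.2.2 p (mem_insert_self p N)
  rw [hBX, Finset.sum_union hdisj, Finset.sum_image hinj] at hbp
  have e1 : ∀ S ∈ I, μ (insert p S) * (if p ∈ insert p S then (1:ℝ) else 0) = lam S := by
    intro S hS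
    rw [if_pos (mem_insert_self p S), mul_one]
    have h := huniq S (hI hS)
    rw [h]
    simp only [hν, if_pos hS]
  have e2 : ∀ T ∈ C \ I, μ T * (if p ∈ T then (1:ℝ) else 0) = 0 := by
    intro T hT
    rw [if_neg (hpnot T (mem_sdiff.mp hT).1), mul_zero]
  rw [Finset.sum_congr rfl e1, Finset.sum_congr rfl e2, Finset.sum_const_zero, add_zero] at hbp
  linarith
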